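/- Let γ > 0, set σ := 1/2 + π/(4γ), and let A be a real number with A² = 2σ(1 − 1/γ − σ). Define x : ℝ → ℝ by x(t) := σ + A·sin(πt/2). Then for every t ∈ ℝ one has x(t) = (γ/2) · ∫_{−3}^{−1} x(t+θ)(1 − x(t+θ)) dθ; i.e., x is an exact (4-periodic) solution of the renewal-equation component of the test problem. -/

import Mathlib

open Real MeasureTheory intervalIntegral

/-- The function `x(t) = σ + A sin(π t / 2)` with `σ = 1/2 + π/(4γ)` and
`A² = 2σ(1 − 1/γ − σ)` is an exact periodic solution of the renewal equation
`x(t) = (γ/2) ∫_{−3}^{−1} x(t+θ)(1 − x(t+θ)) dθ`. -/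
theorem stmt0 (γ : ℝ) (hγ : 0 < γ)
    (σ A : ℝ) (hσ : σ = 1/2 + π/(4*γ))
    (hA : A^2 = 2*σ*(1 - 1/γ - σ))
    (x : ℝ → ℝ) (hx : ∀ t, x t = σ + A * Real.sin (π * t / 2)) :
    ∀ t : ℝ, x t = (γ/2) * ∫ θ in (-3 : ℝ)..(-1), x (t + θ) * (1 - x (t + θ)) := by
  intro t
  have hπ : (π : ℝ) ≠ 0 := Real.pi_ne_zero
  have hγ' : γ ≠ 0 := ne_of_gt hγ
  simp only [hx]
  set F : ℝ → ℝ := fun θ => σ*(1-σ)*θ - A*(1-2*σ)*(2/π)*Real.cos (π*(t+θ)/2)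
      - A^2*(θ/2 - Real.sin (π*(t+θ))/(2*π)) with hFdef
  have hderiv : ∀ θ ∈ Set.uIcc (-3:ℝ) (-1),
      HasDerivAt F ((σ + A * Real.sin (π * (t + θ) / 2)) *
        (1 - (σ + A * Real.sin (π * (t + θ) / 2)))) θ := by
    intro θ _
    have h1 : HasDerivAt (fun θ : ℝ => π*(t+θ)/2) (π/2) θ := by
      have := (((hasDerivAt_id θ).const_add t).const_mul π).div_const 2
      simpa using this
    have h2 : HasDerivAt (fun θ : ℝ => π*(t+θ)) π θ := by
      have := ((hasDerivAt_id θ).const_add t).const_mul π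
      simpa using this
    have hc : HasDerivAt (fun θ : ℝ => Real.cos (π*(t+θ)/2))
        (-Real.sin (π*(t+θ)/2) * (π/2)) θ := (Real.hasDerivAt_cos _).comp θ h1
    have hA1 : HasDerivAt (fun θ : ℝ => σ*(1-σ)*θ) (σ*(1-σ)) θ := by
      simpa using (hasDerivAt_id θ).const_mul (σ*(1-σ))
    have hA2 := hc.const_mul (A*(1-2*σ)*(2/π))
    have hs := ((Real.hasDerivAt_sin _).comp θ h2).div_const (2*π)
    have hA3 : HasDerivAt (fun θ : ℝ => θ/2 - Real.sin (π*(t+θ))/(2*π))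
        (1/2 - Real.cos (π*(t+θ)) * π/(2*π)) θ := ((hasDerivAt_id θ).div_const 2).sub hs
    have hcos2 : Real.cos (π*(t+θ)) = 1 - 2 * Real.sin (π*(t+θ)/2)^2 := by
      have h := Real.cos_two_mul (π*(t+θ)/2)
      rw [show 2*(π*(t+θ)/2) = π*(t+θ) by ring] at h
      have h2 := Real.sin_sq_add_cos_sq (π*(t+θ)/2)
      linarith
    have := (hA1.sub hA2).sub (hA3.const_mul (A^2))
    refine this.congr_deriv ?_
    rw [hcos2]
    field_simp
    ring
  have hcont : IntervalIntegrable
      (fun θ => (σ + A * Real.sin (π * (t + θ) / 2)) *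
        (1 - (σ + A * Real.sin (π * (t + θ) / 2)))) volume (-3 : ℝ) (-1) := by
    apply Continuous.intervalIntegrable
    fun_prop
  have hint := intervalIntegral.integral_eq_sub_of_hasDerivAt hderiv hcont
  rw [hint, hFdef]
  have e1 : Real.cos (π*(t + -1)/2) = Real.sin (π*t/2) := by
    rw [show π*(t + -1)/2 = π*t/2 - π/2 by ring, Real.cos_sub_pi_div_two]
  have e2 : Real.cos (π*(t + -3)/2) = -Real.sin (π*t/2) := by
    rw [show π*(t + -3)/2 = (π*t/2 + π/2) - 2*π by ring, Real.cos_sub_two_pi,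
      Real.cos_add_pi_div_two]
  have e3 : Real.sin (π*(t + -1)) = -Real.sin (π*t) := by
    rw [show π*(t + -1) = π*t - π by ring, Real.sin_sub_pi]
  have e4 : Real.sin (π*(t + -3)) = -Real.sin (π*t) := by
    rw [show π*(t + -3) = (π*t - π) - 2*π by ring, Real.sin_sub_two_pi, Real.sin_sub_pi]
  simp only [e1, e2, e3, e4]
  rw [hA, hσ]
  field_simp
  ring
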